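/- Let n ≥ 2, m = 1, and T = (e^{iξ₂}, …, e^{iξₙ}) a row vector of unimodular entries. Then the block scattering matrix S with blocks (1+TT†)⁻¹(1−TT†), (1+TT†)⁻¹·2T, (I+T†T)⁻¹·2T†, −(I+T†T)⁻¹(I−T†T) equals D†(−I + (2/n)J)D, where D = diag(1, e^{iξ₂},…, e^{iξₙ}) and J is the n×n all-ones matrix. -/

import Mathlib

open Matrix Complex

/-- For m = 1 and T = (e^{iξ₂},…,e^{iξₙ}), the scattering matrix equals
Dᴴ(−I + (2/n)J)D with D = diag(1, e^{iξ₂},…, e^{iξₙ}). -/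
theorem stmt_8 (n : ℕ) (hn : 2 ≤ n) (ξ : Fin (n - 1) → ℝ)
    (T : Matrix (Fin 1) (Fin (n - 1)) ℂ)
    (hT : T = Matrix.of fun _ j => Complex.exp (Complex.I * ξ j))
    (D : Matrix (Fin 1 ⊕ Fin (n - 1)) (Fin 1 ⊕ Fin (n - 1)) ℂ)
    (hD : D = Matrix.diagonal (Sum.elim (fun _ => 1)
      (fun j => Complex.exp (Complex.I * ξ j)))) :
    (Matrix.fromBlocks
      ((1 + T * Tᴴ)⁻¹ * (1 - T * Tᴴ))
      ((1 + T * Tᴴ)⁻¹ * (2 • T))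
      ((1 + Tᴴ * T)⁻¹ * (2 • Tᴴ))
      (-((1 + Tᴴ * T)⁻¹ * (1 - Tᴴ * T)))
      : Matrix (Fin 1 ⊕ Fin (n - 1)) (Fin 1 ⊕ Fin (n - 1)) ℂ)
    = Dᴴ * (-1 + (2 / n : ℂ) • Matrix.of (fun _ _ => (1 : ℂ))) * D := by
  have hn0 : (n : ℂ) ≠ 0 := Nat.cast_ne_zero.2 (by omega)
  have hcast : ((n - 1 : ℕ) : ℂ) = (n : ℂ) - 1 := by
    push_cast [Nat.cast_sub (by omega : 1 ≤ n)]; ring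
  have h1 : T * Tᴴ = ((n - 1 : ℕ) : ℂ) • 1 := by
    subst hT
    ext i j
    fin_cases i; fin_cases j
    simp [Matrix.mul_apply, Matrix.conjTranspose_apply, ← Complex.exp_conj,
      ← Complex.exp_add]
  have hinv1 : (1 + T * Tᴴ)⁻¹ = (n : ℂ)⁻¹ • 1 := by
    apply Matrix.inv_eq_right_inv
    rw [h1, hcast, add_mul, one_mul, Matrix.smul_mul, Matrix.mul_smul, one_mul,
      smul_smul, ← add_smul]
    field_simp
    simp [hn0]
  have hTTT : Tᴴ * T * Tᴴ = ((n : ℂ) - 1) • Tᴴ := by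
    rw [Matrix.mul_assoc, h1, hcast, Matrix.mul_smul, Matrix.mul_one]
  have hsq : (Tᴴ * T) * (Tᴴ * T) = ((n : ℂ) - 1) • (Tᴴ * T) := by
    rw [← Matrix.mul_assoc, hTTT, Matrix.smul_mul]
  have hnn : (n : ℂ)⁻¹ * ((n : ℂ) - 1) = 1 - (n : ℂ)⁻¹ := by field_simp
  have hinv2 : (1 + Tᴴ * T)⁻¹ = 1 - (n : ℂ)⁻¹ • (Tᴴ * T) := by
    apply Matrix.inv_eq_right_inv
    rw [add_mul, one_mul, mul_sub, mul_one, Matrix.mul_smul, hsq, smul_smul,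
      hnn, sub_smul, one_smul]
    abel
  have hA : ((1 + T * Tᴴ)⁻¹ * (1 - T * Tᴴ)) = ((2 / n : ℂ) - 1) • 1 := by
    rw [hinv1, h1, hcast, Matrix.smul_mul, one_mul, smul_sub, smul_smul,
      ← sub_smul, hnn]
    congr 1
    field_simp
    ring
  have hB : ((1 + T * Tᴴ)⁻¹ * (2 • T)) = (2 / n : ℂ) • T := by
    rw [hinv1, Matrix.smul_mul, Matrix.one_mul]
    ext i j
    simp [div_eq_mul_inv]
    ring
  have hC : ((1 + Tᴴ * T)⁻¹ * (2 • Tᴴ)) = (2 / n : ℂ) • Tᴴ := by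
    rw [hinv2, Matrix.sub_mul, Matrix.one_mul, Matrix.smul_mul, Matrix.mul_smul,
      hTTT]
    ext i j
    simp only [Matrix.sub_apply, Matrix.smul_apply, smul_smul, smul_eq_mul,
      nsmul_eq_mul]
    push_cast
    field_simp
    ring
  have hDb : -((1 + Tᴴ * T)⁻¹ * (1 - Tᴴ * T)) = -1 + (2 / n : ℂ) • (Tᴴ * T) := by
    rw [hinv2, sub_mul, one_mul, mul_sub, mul_one, Matrix.smul_mul, hsq,
      smul_smul, hnn]
    rw [sub_smul, one_smul]
    have : (2 / n : ℂ) = (n:ℂ)⁻¹ + (n:ℂ)⁻¹ := by ring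
    rw [this, add_smul]
    abel
  rw [hA, hB, hC, hDb, hD, hT, Matrix.diagonal_conjTranspose]
  ext i j
  rw [Matrix.mul_diagonal, Matrix.diagonal_mul]
  cases i with
  | inl i =>
    cases j with
    | inl j =>
      fin_cases i; fin_cases j
      simp [Matrix.one_apply]
      ring
    | inr j =>
      simp [Matrix.one_apply]
  | inr i =>
    cases j with
    | inl j =>
      simp [Matrix.conjTranspose_apply, ← Complex.exp_conj]
      rw [Complex.exp_neg]
      field_simp
    | inr j =>
      rcases eq_or_ne i j with rfl | hij
      · simp [Matrix.one_apply, Matrix.mul_apply, Matrix.conjTranspose_apply,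
          ← Complex.exp_conj, ← Complex.exp_add]
        rw [Complex.exp_neg]
        field_simp
      · simp [Matrix.one_apply, hij, Matrix.mul_apply, Matrix.conjTranspose_apply,
          ← Complex.exp_conj, ← Complex.exp_add]
        rw [Complex.exp_add]
        ring
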